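/- Let γ be the 4d×4d matrix γ = (1/2)·[[√(XX†),0,0,X],[0,0,0,0],[0,0,0,0],[X†,0,0,√(X†X)]] for a d×d complex matrix X with trace norm Tr√(XX†) = 1. Then γ is a density matrix: γ is positive semidefinite and Tr γ = 1. -/

import Mathlib

open Matrix Kronecker
open scoped ComplexOrder

/-- The square root of a positive semidefinite matrix, as defined in the older Mathlib
(`Matrix.PosSemidef.sqrt`, since removed). -/
noncomputable def Matrix.PosSemidef.sqrt {n 𝕜 : Type*} [Fintype n] [RCLike 𝕜] [DecidableEq n]
    {A : Matrix n n 𝕜} (hA : A.PosSemidef) : Matrix n n 𝕜 :=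
  hA.1.eigenvectorUnitary.1 * diagonal ((↑) ∘ (√·) ∘ hA.1.eigenvalues) *
    (star hA.1.eigenvectorUnitary : Matrix n n 𝕜)

/-- The basis vector |ij⟩ on ℂ² ⊗ ℂ². -/
def ket2 (i j : Fin 2) : Fin 2 × Fin 2 → ℂ := fun p => if p = (i, j) then 1 else 0

lemma Matrix.PosSemidef.posSemidef_sqrt {n : Type*} [Fintype n] [DecidableEq n]
    {A : Matrix n n ℂ} (hA : A.PosSemidef) : hA.sqrt.PosSemidef := by
  rw [Matrix.PosSemidef.sqrt]
  have hd : (diagonal (((↑) : ℝ → ℂ) ∘ (√·) ∘ hA.1.eigenvalues)).PosSemidef :=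
    posSemidef_diagonal_iff.mpr fun i => Complex.zero_le_real.mpr (Real.sqrt_nonneg _)
  simpa [star_eq_conjTranspose] using hd.mul_mul_conjTranspose_same
    (hA.1.eigenvectorUnitary : Matrix n n ℂ)

lemma Matrix.PosSemidef.sqrt_mul_self {n : Type*} [Fintype n] [DecidableEq n]
    {A : Matrix n n ℂ} (hA : A.PosSemidef) : hA.sqrt * hA.sqrt = A := by
  have hUU : (star hA.1.eigenvectorUnitary : Matrix n n ℂ) * hA.1.eigenvectorUnitary = 1 :=
    Unitary.coe_star_mul_self _
  conv_rhs => rw [hA.1.spectral_theorem, Unitary.conjStarAlgAut_apply]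
  rw [Matrix.PosSemidef.sqrt]
  simp only [Matrix.mul_assoc]
  rw [← Matrix.mul_assoc _ (hA.1.eigenvectorUnitary : Matrix n n ℂ), hUU, Matrix.one_mul,
    ← Matrix.mul_assoc (diagonal _), diagonal_mul_diagonal]
  congr 3
  funext i
  simp [← Complex.ofReal_mul, Real.mul_self_sqrt (hA.eigenvalues_nonneg i)]

open scoped MatrixOrder in
lemma Matrix.PosSemidef.eq_sqrt_of_sq_eq {n : Type*} [Fintype n] [DecidableEq n]
    {A B : Matrix n n ℂ} (hA : A.PosSemidef) (hB : B.PosSemidef) (hsq : A ^ 2 = B) :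
    A = hB.sqrt := by
  have h1 : CFC.sqrt B = A := (CFC.sqrt_eq_iff B A (nonneg_iff_posSemidef.mpr hB)
    (nonneg_iff_posSemidef.mpr hA)).mpr (by rw [← hsq, sq])
  have h2 : CFC.sqrt B = hB.sqrt := (CFC.sqrt_eq_iff B _ (nonneg_iff_posSemidef.mpr hB)
    (nonneg_iff_posSemidef.mpr hB.posSemidef_sqrt)).mpr hB.sqrt_mul_self
  rw [← h1, h2]

section Aux

open Polynomial

set_option linter.unusedSectionVars false

variable {n : Type*} [Fintype n] [DecidableEq n]

lemma aux_psd_smul {M : Matrix n n ℂ} (hM : M.PosSemidef) {c : ℂ} (hc : 0 ≤ c) :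
    (c • M).PosSemidef := by
  have hcs : star c = c := by
    rw [Complex.star_def, Complex.conj_eq_iff_im]
    exact ((Complex.nonneg_iff).mp hc).2.symm
  refine posSemidef_iff_dotProduct_mulVec.mpr ⟨?_, ?_⟩
  · rw [IsHermitian, conjTranspose_smul, hcs, hM.1.eq]
  · intro x
    rw [smul_mulVec, dotProduct_smul]
    exact mul_nonneg hc (hM.dotProduct_mulVec_nonneg x)

lemma aux_psd_blockdiag {m : Type*} [Fintype m] [DecidableEq m]
    {A : Matrix n n ℂ} {B : Matrix m m ℂ} (hA : A.PosSemidef) (hB : B.PosSemidef) :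
    (fromBlocks A 0 0 B).PosSemidef := by
  refine posSemidef_iff_dotProduct_mulVec.mpr ⟨?_, ?_⟩
  · rw [IsHermitian, fromBlocks_conjTranspose, conjTranspose_zero, conjTranspose_zero,
      hA.1.eq, hB.1.eq]
  · intro x
    have hx : star x = Sum.elim (star (x ∘ Sum.inl)) (star (x ∘ Sum.inr)) := by
      funext s; cases s <;> rfl
    rw [fromBlocks_mulVec, hx, sumElim_dotProduct_sumElim]
    simp only [zero_mulVec, add_zero, zero_add]
    exact add_nonneg (hA.dotProduct_mulVec_nonneg _) (hB.dotProduct_mulVec_nonneg _)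

lemma aux_psd_add_of_sq {H D : Matrix n n ℂ} (hH : H.IsHermitian) (hD : D.PosSemidef)
    (hsq : D * D = H * H) : (D + H).PosSemidef := by
  set U : Matrix n n ℂ := (hH.eigenvectorUnitary : Matrix n n ℂ) with hUdef
  have hUU : star U * U = 1 := Unitary.coe_star_mul_self hH.eigenvectorUnitary
  have hspec : H = U * diagonal (Complex.ofReal ∘ hH.eigenvalues) * star U :=
    hH.spectral_theorem
  set e := hH.eigenvalues with hedef
  set S : Matrix n n ℂ := U * diagonal (fun i => Complex.ofReal |e i|) * star U with hSdef
  have hdiagS : (diagonal (fun i => Complex.ofReal |e i|)).PosSemidef :=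
    posSemidef_diagonal_iff.mpr fun i => Complex.zero_le_real.mpr (abs_nonneg _)
  have hS : S.PosSemidef := hdiagS.mul_mul_conjTranspose_same U
  have hSS : S * S = H * H := by
    rw [hSdef]
    rw [hspec]
    rw [Matrix.mul_assoc, Matrix.mul_assoc, ← Matrix.mul_assoc (star U) (U * _),
      ← Matrix.mul_assoc (star U) U, hUU, Matrix.one_mul,
      ← Matrix.mul_assoc (diagonal _), diagonal_mul_diagonal,
      Matrix.mul_assoc (U * _), Matrix.mul_assoc U, ← Matrix.mul_assoc (star U) (U * _),
      ← Matrix.mul_assoc (star U) U, hUU, Matrix.one_mul,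
      ← Matrix.mul_assoc (diagonal _), diagonal_mul_diagonal]
    have hde : (diagonal fun i => (Complex.ofReal |e i|) * Complex.ofReal |e i|)
        = diagonal (fun i => (Complex.ofReal ∘ e) i * (Complex.ofReal ∘ e) i) := by
      funext i
      simp [Function.comp, ← Complex.ofReal_mul, abs_mul_abs_self]
    rw [hde]
  have hHH : (H * H).PosSemidef := by
    have := posSemidef_conjTranspose_mul_self H
    rwa [hH.eq] at this
  have hDS : D = S := by
    rw [hD.eq_sqrt_of_sq_eq hHH (by rw [pow_two, hsq]),
      hS.eq_sqrt_of_sq_eq hHH (by rw [pow_two, hSS])]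
  rw [hDS, hSdef]
  rw [hspec]
  rw [← Matrix.add_mul, ← Matrix.mul_add, diagonal_add]
  exact (posSemidef_diagonal_iff.mpr fun i => by
    have h1 : (0:ℝ) ≤ |e i| + e i := by cases abs_cases (e i) <;> linarith
    have h2 := Complex.zero_le_real.mpr h1
    simpa [Complex.ofReal_add] using h2).mul_mul_conjTranspose_same U

lemma aux_eval_charpoly (M : Matrix n n ℂ) (t : ℂ) :
    M.charpoly.eval t = (t • (1 : Matrix n n ℂ) - M).det := by
  rw [Matrix.charpoly, ← Polynomial.coe_evalRingHom, RingHom.map_det]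
  congr 1
  funext i j
  by_cases h : i = j
  · subst h
    simp [charmatrix_apply_eq, Matrix.map_apply, Matrix.one_apply, Matrix.smul_apply]
  · simp [charmatrix_apply_ne _ _ _ h, Matrix.map_apply, Matrix.one_apply_ne h,
      Matrix.smul_apply, Matrix.sub_apply]

lemma aux_herm_charpoly {M : Matrix n n ℂ} (hM : M.IsHermitian) :
    M.charpoly = ∏ i, (X - C (hM.eigenvalues i : ℂ)) := by
  apply Polynomial.funext
  intro t
  rw [aux_eval_charpoly]
  set U : Matrix n n ℂ := (hM.eigenvectorUnitary : Matrix n n ℂ)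
  have hUU : star U * U = 1 := Unitary.coe_star_mul_self hM.eigenvectorUnitary
  have hUU' : U * star U = 1 := Unitary.coe_mul_star_self hM.eigenvectorUnitary
  have hspec : M = U * diagonal (Complex.ofReal ∘ hM.eigenvalues) * star U :=
    hM.spectral_theorem
  have key : t • (1 : Matrix n n ℂ) - M
      = U * (t • (1 : Matrix n n ℂ) - diagonal (Complex.ofReal ∘ hM.eigenvalues)) * star U := by
    conv_lhs => rw [hspec]
    rw [Matrix.mul_sub, Matrix.sub_mul, Matrix.mul_smul, Matrix.smul_mul, Matrix.mul_one, hUU']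
  rw [key, det_mul, det_mul, mul_comm, ← mul_assoc, ← det_mul, hUU, det_one, one_mul]
  have : t • (1 : Matrix n n ℂ) - diagonal (Complex.ofReal ∘ hM.eigenvalues)
      = diagonal (fun i => t - (hM.eigenvalues i : ℂ)) := by
    rw [smul_one_eq_diagonal, diagonal_sub]
    rfl
  rw [this, det_diagonal, eval_prod]
  simp

lemma aux_eig_multiset_eq (M N : Matrix n n ℂ) (hMN : (M * N).IsHermitian)
    (hNM : (N * M).IsHermitian) :
    Finset.univ.val.map hMN.eigenvalues = Finset.univ.val.map hNM.eigenvalues := by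
  have h : (M * N).charpoly = (N * M).charpoly := by
    apply Polynomial.funext
    intro t
    rw [aux_eval_charpoly, aux_eval_charpoly]
    by_cases ht : t = 0
    · subst ht
      simp only [zero_smul, zero_sub, det_neg, det_mul]
      ring
    · have h1 : t • (1 : Matrix n n ℂ) - M * N = t • (1 + M * (-(t⁻¹ • N))) := by
        rw [mul_neg, Matrix.mul_smul, smul_add, smul_neg, smul_smul, mul_inv_cancel₀ ht, one_smul]
        abel
      have h2 : (1 : Matrix n n ℂ) + (-(t⁻¹ • N)) * M
          = t⁻¹ • (t • (1 : Matrix n n ℂ) - N * M) := by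
        rw [Matrix.neg_mul, Matrix.smul_mul, smul_sub, smul_smul, inv_mul_cancel₀ ht, one_smul]
        abel
      rw [h1, det_smul, det_one_add_mul_comm, h2, det_smul, ← mul_assoc, ← mul_pow,
        mul_inv_cancel₀ ht, one_pow, one_mul]
  rw [aux_herm_charpoly hMN, aux_herm_charpoly hNM] at h
  have h' : ((Finset.univ.val.map (fun i => (hMN.eigenvalues i : ℂ))).map (fun a => X - C a)).prod
      = ((Finset.univ.val.map (fun i => (hNM.eigenvalues i : ℂ))).map (fun a => X - C a)).prod := by
    rw [Finset.prod_eq_multiset_prod, Finset.prod_eq_multiset_prod] at h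
    rw [Multiset.map_map, Multiset.map_map]
    simpa [Function.comp_def] using h
  have hroots := congrArg Polynomial.roots h'
  rw [Polynomial.roots_multiset_prod_X_sub_C, Polynomial.roots_multiset_prod_X_sub_C] at hroots
  apply Multiset.map_injective (f := (Complex.ofReal : ℝ → ℂ)) Complex.ofReal_injective
  simpa [Multiset.map_map, Function.comp] using hroots

lemma aux_trace_sqrt_eq {M : Matrix n n ℂ} (hM : M.PosSemidef) :
    hM.sqrt.trace
      = ((Finset.univ.val.map hM.1.eigenvalues).map (fun r => (Real.sqrt r : ℂ))).sum := by
  rw [Matrix.PosSemidef.sqrt, trace_mul_cycle, Unitary.coe_star_mul_self, Matrix.one_mul,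
    trace_diagonal, Finset.sum_eq_multiset_sum, Multiset.map_map]
  rfl

lemma aux_trace_sqrt_comm (Y : Matrix n n ℂ) :
    (posSemidef_conjTranspose_mul_self Y).sqrt.trace
      = (posSemidef_self_mul_conjTranspose Y).sqrt.trace := by
  rw [aux_trace_sqrt_eq, aux_trace_sqrt_eq]
  congr 1
  exact congrArg _ (aux_eig_multiset_eq Yᴴ Y _ _)

end Aux

/-- The embedding matrix sending `inl k ↦ |00⟩⊗|k⟩` and `inr k ↦ |11⟩⊗|k⟩`. -/
def Emat (d : ℕ) : Matrix ((Fin 2 × Fin 2) × Fin d) (Fin d ⊕ Fin d) ℂ :=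
  Matrix.of fun p s =>
    Sum.elim (fun l => ket2 0 0 p.1 * (if p.2 = l then 1 else 0))
      (fun l => ket2 1 1 p.1 * (if p.2 = l then 1 else 0)) s

lemma aux_key_eq {d : ℕ} (A B X : Matrix (Fin d) (Fin d) ℂ) :
    vecMulVec (ket2 0 0) (star (ket2 0 0)) ⊗ₖ A
      + vecMulVec (ket2 0 0) (star (ket2 1 1)) ⊗ₖ X
      + vecMulVec (ket2 1 1) (star (ket2 0 0)) ⊗ₖ Xᴴ
      + vecMulVec (ket2 1 1) (star (ket2 1 1)) ⊗ₖ B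
    = Emat d * fromBlocks A X Xᴴ B * (Emat d)ᴴ := by
  ext ⟨p, k⟩ ⟨q, l⟩
  simp only [Matrix.mul_apply, Fintype.sum_sum_type, conjTranspose_apply, Emat, Matrix.of_apply,
    Sum.elim_inl, Sum.elim_inr, fromBlocks_apply₁₁, fromBlocks_apply₁₂, fromBlocks_apply₂₁,
    fromBlocks_apply₂₂, Matrix.add_apply, kroneckerMap_apply, vecMulVec_apply, Pi.star_apply,
    star_mul', star_one, star_zero, mul_ite, ite_mul, one_mul, mul_one, zero_mul,
    mul_zero, Finset.sum_ite_eq, Finset.sum_ite_eq', Finset.mem_univ, if_true,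
    Finset.sum_add_distrib, RCLike.star_def, _root_.map_one, _root_.map_zero]
  simp [ket2, apply_ite (starRingEnd ℂ)]
  split_ifs <;> ring

/-- If X is a d×d complex matrix with trace norm Tr√(XX†) = 1, then
γ = (1/2)(|00⟩⟨00|⊗√(XX†) + |00⟩⟨11|⊗X + |11⟩⟨00|⊗X† + |11⟩⟨11|⊗√(X†X))
is a density matrix: positive semidefinite with unit trace. -/
theorem stmt_9 {d : ℕ} (X : Matrix (Fin d) (Fin d) ℂ)
    (htr : (Matrix.posSemidef_self_mul_conjTranspose X).sqrt.trace = 1) :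
    ((1 / 2 : ℂ) •
      (vecMulVec (ket2 0 0) (star (ket2 0 0)) ⊗ₖ (Matrix.posSemidef_self_mul_conjTranspose X).sqrt
        + vecMulVec (ket2 0 0) (star (ket2 1 1)) ⊗ₖ X
        + vecMulVec (ket2 1 1) (star (ket2 0 0)) ⊗ₖ Xᴴ
        + vecMulVec (ket2 1 1) (star (ket2 1 1)) ⊗ₖ
            (Matrix.posSemidef_conjTranspose_mul_self X).sqrt)).PosSemidef ∧
    ((1 / 2 : ℂ) •
      (vecMulVec (ket2 0 0) (star (ket2 0 0)) ⊗ₖ (Matrix.posSemidef_self_mul_conjTranspose X).sqrt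
        + vecMulVec (ket2 0 0) (star (ket2 1 1)) ⊗ₖ X
        + vecMulVec (ket2 1 1) (star (ket2 0 0)) ⊗ₖ Xᴴ
        + vecMulVec (ket2 1 1) (star (ket2 1 1)) ⊗ₖ
            (Matrix.posSemidef_conjTranspose_mul_self X).sqrt)).trace = 1 := by
  set A := (Matrix.posSemidef_self_mul_conjTranspose X).sqrt with hAdef
  set B := (Matrix.posSemidef_conjTranspose_mul_self X).sqrt with hBdef
  have hA : A.PosSemidef := (Matrix.posSemidef_self_mul_conjTranspose X).posSemidef_sqrt
  have hB : B.PosSemidef := (Matrix.posSemidef_conjTranspose_mul_self X).posSemidef_sqrt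
  have hAA : A * A = X * Xᴴ := (Matrix.posSemidef_self_mul_conjTranspose X).sqrt_mul_self
  have hBB : B * B = Xᴴ * X := (Matrix.posSemidef_conjTranspose_mul_self X).sqrt_mul_self
  -- the 2d × 2d block matrix is PSD
  have hHerm : (fromBlocks (0 : Matrix (Fin d) (Fin d) ℂ) X Xᴴ 0).IsHermitian := by
    rw [IsHermitian, fromBlocks_conjTranspose, conjTranspose_conjTranspose, conjTranspose_zero]
  have hsq : (fromBlocks A 0 0 B) * (fromBlocks A 0 0 B)
      = (fromBlocks (0 : Matrix (Fin d) (Fin d) ℂ) X Xᴴ 0)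
        * (fromBlocks (0 : Matrix (Fin d) (Fin d) ℂ) X Xᴴ 0) := by
    rw [fromBlocks_multiply, fromBlocks_multiply]
    simp [hAA, hBB]
  have hG : (fromBlocks A X Xᴴ B).PosSemidef := by
    have := aux_psd_add_of_sq hHerm (aux_psd_blockdiag hA hB) hsq
    have heq : fromBlocks A 0 0 B + fromBlocks (0 : Matrix (Fin d) (Fin d) ℂ) X Xᴴ 0
        = fromBlocks A X Xᴴ B := by
      rw [fromBlocks_add]
      simp
    rwa [heq] at this
  have hhalf : (0 : ℂ) ≤ (1 / 2 : ℂ) := by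
    have := Complex.zero_le_real.mpr (by norm_num : (0:ℝ) ≤ (1/2 : ℝ))
    simpa using this
  constructor
  · rw [aux_key_eq]
    exact aux_psd_smul (hG.mul_mul_conjTranspose_same (Emat d)) hhalf
  · rw [trace_smul, trace_add, trace_add, trace_add, trace_kronecker, trace_kronecker,
      trace_kronecker, trace_kronecker]
    have h00 : (vecMulVec (ket2 0 0) (star (ket2 0 0))).trace = 1 := by
      simp [Matrix.trace, vecMulVec_apply, ket2, Fintype.sum_prod_type, Fin.sum_univ_two]
    have h11 : (vecMulVec (ket2 1 1) (star (ket2 1 1))).trace = 1 := by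
      simp [Matrix.trace, vecMulVec_apply, ket2, Fintype.sum_prod_type, Fin.sum_univ_two]
    have h01 : (vecMulVec (ket2 0 0) (star (ket2 1 1))).trace = 0 := by
      simp [Matrix.trace, vecMulVec_apply, ket2, Fintype.sum_prod_type, Fin.sum_univ_two]
    have h10 : (vecMulVec (ket2 1 1) (star (ket2 0 0))).trace = 0 := by
      simp [Matrix.trace, vecMulVec_apply, ket2, Fintype.sum_prod_type, Fin.sum_univ_two]
    have hBtr : B.trace = 1 := by
      rw [hBdef, aux_trace_sqrt_comm, ← hAdef, htr]
    rw [h00, h11, h01, h10, htr, hBtr]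
    simp
    norm_num
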